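/- Physics-based update formula for the Hermite scaling parameter: Let N ∈ ℕ with N ≥ 2, α > 0, u ∈ ℝ, and let c_0, …, c_N be real numbers with c_0 ≠ 0. Define f(v) := Σ_{m=0}^N c_m·ψ_m^{α,u}(v) and ū := (∫_ℝ v·f(v) dv)/(∫_ℝ f(v) dv). Then 2·(∫_ℝ (v − ū)²·f(v) dv)/(∫_ℝ f(v) dv) = α²·(1 + √2·(c_2/c_0) − (c_1/c_0)²). -/

import Mathlib

open MeasureTheory Real Finset

/-- Physicists' Hermite polynomials: `H 0 x = 1`, `H 1 x = 2x`,
`H (n+1) x = 2x · H n x − 2n · H (n−1) x`. -/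
noncomputable def physHermite : ℕ → ℝ → ℝ
  | 0 => fun _ => 1
  | 1 => fun x => 2 * x
  | (n + 2) => fun x => 2 * x * physHermite (n + 1) x - 2 * ((n : ℝ) + 1) * physHermite n x

/-- Asymmetrically weighted Hermite function
`ψ_n^{α,u}(v) = (π·2^n·n!)^{-1/2} · H_n((v−u)/α) · exp(−((v−u)/α)²)`. -/
noncomputable def awHermite (α u : ℝ) (n : ℕ) (v : ℝ) : ℝ :=
  (Real.sqrt (Real.pi * 2 ^ n * (n.factorial : ℝ)))⁻¹ * physHermite n ((v - u) / α) *
    Real.exp (-((v - u) / α) ^ 2)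

/-- The weight `ω(v) = √π · α⁻¹ · exp(((v−u)/α)²)`. -/
noncomputable def hermiteWeight (α u : ℝ) (v : ℝ) : ℝ :=
  Real.sqrt Real.pi * α⁻¹ * Real.exp (((v - u) / α) ^ 2)

/-- Transformation matrix entries `ℙ_{n,m} = ∫ ψ_m^{α',u'}(v) · ψ_n^{α,u}(v) · ω(v) dv`. -/
noncomputable def transferMatrix (α' u' α u : ℝ) (n m : ℕ) : ℝ :=
  ∫ v : ℝ, awHermite α' u' m v * awHermite α u n v * hermiteWeight α u v

open Filter

lemma physHermite_two_step (n : ℕ) (x : ℝ) :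
    physHermite (n + 2) x = 2 * x * physHermite (n + 1) x - 2 * ((n : ℝ) + 1) * physHermite n x :=
  rfl

lemma hasDerivAt_pH_exp (n : ℕ) (x : ℝ) :
    HasDerivAt (fun y : ℝ => physHermite n y * Real.exp (-y ^ 2))
      (-(physHermite (n + 1) x * Real.exp (-x ^ 2))) x := by
  induction n using Nat.twoStepInduction generalizing x with
  | zero =>
    have h : HasDerivAt (fun y : ℝ => Real.exp (-y ^ 2))
        (Real.exp (-x ^ 2) * -((2 : ℕ) * x ^ 1)) x := ((hasDerivAt_pow 2 x).neg).exp
    have heq : (fun y : ℝ => physHermite 0 y * Real.exp (-y ^ 2))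
        = fun y : ℝ => Real.exp (-y ^ 2) := by
      funext y; simp [physHermite]
    rw [heq]
    convert h using 1
    simp [physHermite]; ring
  | one =>
    have hexp : HasDerivAt (fun y : ℝ => Real.exp (-y ^ 2))
        (Real.exp (-x ^ 2) * -((2 : ℕ) * x ^ 1)) x := ((hasDerivAt_pow 2 x).neg).exp
    have hpoly : HasDerivAt (fun y : ℝ => 2 * y) 2 x := by simpa using (hasDerivAt_id x).const_mul 2
    have h := hpoly.mul hexp
    have heq : (fun y : ℝ => physHermite 1 y * Real.exp (-y ^ 2))
        = fun y : ℝ => (2 * y) * Real.exp (-y ^ 2) := by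
      funext y; simp [physHermite]
    rw [heq]
    refine h.congr_deriv ?_
    simp [physHermite]; ring
  | more n ih1 ih2 =>
    have key : (fun y : ℝ => physHermite (n + 2) y * Real.exp (-y ^ 2))
        = fun y : ℝ => 2 * y * (physHermite (n + 1) y * Real.exp (-y ^ 2))
            - (2 * ((n : ℝ) + 1)) * (physHermite n y * Real.exp (-y ^ 2)) := by
      funext y; rw [physHermite_two_step]; ring
    rw [key]
    have h := (((hasDerivAt_id x).const_mul 2).mul (ih2 x)).sub ((ih1 x).const_mul (2 * ((n : ℝ) + 1)))
    simp only [id_eq] at h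
    refine h.congr_deriv ?_
    have h3 : physHermite (n + 3) x
        = 2 * x * physHermite (n + 2) x - 2 * ((n : ℝ) + 1 + 1) * physHermite (n + 1) x := by
      have := physHermite_two_step (n + 1) x
      push_cast at this
      linarith
    rw [h3]; ring

lemma integrable_pow_mul_exp (k : ℕ) :
    Integrable (fun x : ℝ => x ^ k * Real.exp (-x ^ 2)) := by
  have h := integrable_rpow_mul_exp_neg_mul_sq (b := 1) one_pos
    (s := (k : ℝ)) (by exact_mod_cast neg_one_lt_zero.trans_le (Nat.cast_nonneg k))
  simpa [Real.rpow_natCast] using h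

lemma integrable_pow_pH_exp (n k : ℕ) :
    Integrable (fun x : ℝ => x ^ k * physHermite n x * Real.exp (-x ^ 2)) := by
  induction n using Nat.twoStepInduction generalizing k with
  | zero => simpa [physHermite] using integrable_pow_mul_exp k
  | one =>
    have h := (integrable_pow_mul_exp (k + 1)).const_mul 2
    have heq : (fun x : ℝ => x ^ k * physHermite 1 x * Real.exp (-x ^ 2))
        = fun x : ℝ => 2 * (x ^ (k + 1) * Real.exp (-x ^ 2)) := by
      funext x; simp [physHermite]; ring
    rw [heq]; exact h
  | more n ih1 ih2 =>
    have h := ((ih2 (k + 1)).const_mul 2).sub ((ih1 k).const_mul (2 * ((n : ℝ) + 1)))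
    have heq : (fun x : ℝ => x ^ k * physHermite (n + 2) x * Real.exp (-x ^ 2))
        = fun x : ℝ => 2 * (x ^ (k + 1) * physHermite (n + 1) x * Real.exp (-x ^ 2))
            - (2 * ((n : ℝ) + 1)) * (x ^ k * physHermite n x * Real.exp (-x ^ 2)) := by
      funext x; rw [physHermite_two_step]; ring
    rw [heq]; exact h

lemma tendsto_pow_exp_atTop (k : ℕ) :
    Tendsto (fun x : ℝ => x ^ k * Real.exp (-x ^ 2)) atTop (nhds 0) := by
  have h1 : Tendsto (fun x : ℝ => (x ^ 2) ^ k * Real.exp (-x ^ 2)) atTop (nhds 0) :=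
    (tendsto_pow_mul_exp_neg_atTop_nhds_zero k).comp (tendsto_pow_atTop two_ne_zero)
  refine squeeze_zero' ?_ ?_ h1
  · filter_upwards [eventually_ge_atTop (0 : ℝ)] with x hx
    positivity
  · filter_upwards [eventually_ge_atTop (1 : ℝ)] with x hx
    have h2 : x ^ k ≤ (x ^ 2) ^ k := by
      rw [← pow_mul]
      exact pow_le_pow_right₀ hx (by omega)
    exact mul_le_mul_of_nonneg_right h2 (Real.exp_nonneg _)

lemma tendsto_pow_exp_atBot (k : ℕ) :
    Tendsto (fun x : ℝ => x ^ k * Real.exp (-x ^ 2)) atBot (nhds 0) := by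
  have h := ((tendsto_pow_exp_atTop k).comp tendsto_neg_atBot_atTop).const_mul ((-1 : ℝ) ^ k)
  have heq : (fun x : ℝ => x ^ k * Real.exp (-x ^ 2))
      = fun x : ℝ => (-1 : ℝ) ^ k * ((-x) ^ k * Real.exp (-(-x) ^ 2)) := by
    funext x
    rw [neg_sq, ← mul_assoc, ← mul_pow]
    norm_num
  rw [heq]
  simpa using h

lemma tendsto_pow_pH_exp (n k : ℕ) (l : Filter ℝ) (hl : l = atTop ∨ l = atBot) :
    Tendsto (fun x : ℝ => x ^ k * physHermite n x * Real.exp (-x ^ 2)) l (nhds 0) := by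
  have base : ∀ j : ℕ, Tendsto (fun x : ℝ => x ^ j * Real.exp (-x ^ 2)) l (nhds 0) := by
    rcases hl with h | h <;> subst h
    · exact tendsto_pow_exp_atTop
    · exact tendsto_pow_exp_atBot
  induction n using Nat.twoStepInduction generalizing k with
  | zero => simpa [physHermite, mul_assoc] using base k
  | one =>
    have h := (base (k + 1)).const_mul 2
    have heq : (fun x : ℝ => x ^ k * physHermite 1 x * Real.exp (-x ^ 2))
        = fun x : ℝ => 2 * (x ^ (k + 1) * Real.exp (-x ^ 2)) := by
      funext x; simp [physHermite]; ring
    rw [heq]; simpa using h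
  | more n ih1 ih2 =>
    have h := ((ih2 (k + 1)).const_mul 2).sub ((ih1 k).const_mul (2 * ((n : ℝ) + 1)))
    have heq : (fun x : ℝ => x ^ k * physHermite (n + 2) x * Real.exp (-x ^ 2))
        = fun x : ℝ => 2 * (x ^ (k + 1) * physHermite (n + 1) x * Real.exp (-x ^ 2))
            - (2 * ((n : ℝ) + 1)) * (x ^ k * physHermite n x * Real.exp (-x ^ 2)) := by
      funext x; rw [physHermite_two_step]; ring
    rw [heq]; simpa using h

lemma J_zero_succ (n : ℕ) :
    ∫ x : ℝ, physHermite (n + 1) x * Real.exp (-x ^ 2) = 0 := by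
  have hderiv : ∀ x : ℝ, HasDerivAt (fun y : ℝ => physHermite n y * Real.exp (-y ^ 2))
      (-(physHermite (n + 1) x * Real.exp (-x ^ 2))) x := hasDerivAt_pH_exp n
  have hint : Integrable (fun x : ℝ => -(physHermite (n + 1) x * Real.exp (-x ^ 2))) := by
    have h0 : Integrable (fun x : ℝ => physHermite (n + 1) x * Real.exp (-x ^ 2)) := by
      simpa using integrable_pow_pH_exp (n + 1) 0
    exact h0.neg
  have hbot : Tendsto (fun y : ℝ => physHermite n y * Real.exp (-y ^ 2)) atBot (nhds 0) := by
    simpa using tendsto_pow_pH_exp n 0 atBot (Or.inr rfl)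
  have htop : Tendsto (fun y : ℝ => physHermite n y * Real.exp (-y ^ 2)) atTop (nhds 0) := by
    simpa using tendsto_pow_pH_exp n 0 atTop (Or.inl rfl)
  have h := integral_of_hasDerivAt_of_tendsto hderiv hint hbot htop
  rw [sub_zero] at h
  rw [← neg_eq_zero, ← integral_neg]
  exact h

lemma J_rec (k n : ℕ) :
    ∫ x : ℝ, x ^ (k + 1) * physHermite (n + 1) x * Real.exp (-x ^ 2)
      = ((k : ℝ) + 1) * ∫ x : ℝ, x ^ k * physHermite n x * Real.exp (-x ^ 2) := by
  set F' : ℝ → ℝ := fun x => ((k : ℝ) + 1) * (x ^ k * physHermite n x * Real.exp (-x ^ 2))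
      - x ^ (k + 1) * physHermite (n + 1) x * Real.exp (-x ^ 2) with hF'
  have hderiv : ∀ x : ℝ,
      HasDerivAt (fun y : ℝ => y ^ (k + 1) * (physHermite n y * Real.exp (-y ^ 2))) (F' x) x := by
    intro x
    have h := (hasDerivAt_pow (k + 1) x).mul (hasDerivAt_pH_exp n x)
    refine h.congr_deriv ?_
    rw [hF']
    push_cast
    ring
  have hint : Integrable F' :=
    ((integrable_pow_pH_exp n k).const_mul _).sub (integrable_pow_pH_exp (n + 1) (k + 1))
  have hbot : Tendsto (fun y : ℝ => y ^ (k + 1) * (physHermite n y * Real.exp (-y ^ 2))) atBot (nhds 0) := by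
    have := tendsto_pow_pH_exp n (k + 1) atBot (Or.inr rfl)
    simpa [mul_assoc] using this
  have htop : Tendsto (fun y : ℝ => y ^ (k + 1) * (physHermite n y * Real.exp (-y ^ 2))) atTop (nhds 0) := by
    have := tendsto_pow_pH_exp n (k + 1) atTop (Or.inl rfl)
    simpa [mul_assoc] using this
  have h := integral_of_hasDerivAt_of_tendsto hderiv hint hbot htop
  rw [sub_zero, hF'] at h
  rw [integral_sub ((integrable_pow_pH_exp n k).const_mul _) (integrable_pow_pH_exp (n + 1) (k + 1)),
    integral_const_mul, sub_eq_zero] at h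
  linarith

lemma J00 : ∫ x : ℝ, physHermite 0 x * Real.exp (-x ^ 2) = Real.sqrt π := by
  have h := integral_gaussian 1
  simp only [physHermite, one_mul, neg_mul] at h ⊢
  rw [h, div_one]

lemma J10 : ∫ x : ℝ, x ^ 1 * physHermite 0 x * Real.exp (-x ^ 2) = 0 := by
  have hderiv : ∀ x : ℝ, HasDerivAt (fun y : ℝ => -(2 : ℝ)⁻¹ * Real.exp (-y ^ 2))
      (x ^ 1 * physHermite 0 x * Real.exp (-x ^ 2)) x := by
    intro x
    have h : HasDerivAt (fun y : ℝ => Real.exp (-y ^ 2))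
        (Real.exp (-x ^ 2) * -((2 : ℕ) * x ^ 1)) x := ((hasDerivAt_pow 2 x).neg).exp
    have := h.const_mul (-(2 : ℝ)⁻¹)
    refine this.congr_deriv ?_
    simp [physHermite]; ring
  have hint : Integrable (fun x : ℝ => x ^ 1 * physHermite 0 x * Real.exp (-x ^ 2)) :=
    integrable_pow_pH_exp 0 1
  have hbot : Tendsto (fun y : ℝ => -(2 : ℝ)⁻¹ * Real.exp (-y ^ 2)) atBot (nhds 0) := by
    have := (tendsto_pow_exp_atBot 0).const_mul (-(2 : ℝ)⁻¹)
    simpa using this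
  have htop : Tendsto (fun y : ℝ => -(2 : ℝ)⁻¹ * Real.exp (-y ^ 2)) atTop (nhds 0) := by
    have := (tendsto_pow_exp_atTop 0).const_mul (-(2 : ℝ)⁻¹)
    simpa using this
  have h := integral_of_hasDerivAt_of_tendsto hderiv hint hbot htop
  simpa using h

lemma J1_1 : ∫ x : ℝ, x ^ 1 * physHermite 1 x * Real.exp (-x ^ 2) = Real.sqrt π := by
  rw [J_rec 0 0]
  have h : (fun x : ℝ => x ^ 0 * physHermite 0 x * Real.exp (-x ^ 2))
      = fun x : ℝ => physHermite 0 x * Real.exp (-x ^ 2) := by funext x; ring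
  rw [h, J00]
  norm_num

lemma J2_0 : ∫ x : ℝ, x ^ 2 * physHermite 0 x * Real.exp (-x ^ 2) = Real.sqrt π / 2 := by
  have h : (fun x : ℝ => x ^ 1 * physHermite 1 x * Real.exp (-x ^ 2))
      = fun x : ℝ => 2 * (x ^ 2 * physHermite 0 x * Real.exp (-x ^ 2)) := by
    funext x; simp [physHermite]; ring
  have h2 := J1_1
  rw [h, integral_const_mul] at h2
  linarith

lemma J2_1 : ∫ x : ℝ, x ^ 2 * physHermite 1 x * Real.exp (-x ^ 2) = 0 := by
  rw [J_rec 1 0, J10]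
  ring

lemma J2_2 : ∫ x : ℝ, x ^ 2 * physHermite 2 x * Real.exp (-x ^ 2) = 2 * Real.sqrt π := by
  rw [J_rec 1 1, J1_1]
  norm_num

lemma J0_succ (n : ℕ) : ∫ x : ℝ, x ^ 0 * physHermite (n + 1) x * Real.exp (-x ^ 2) = 0 := by
  have h : (fun x : ℝ => x ^ 0 * physHermite (n + 1) x * Real.exp (-x ^ 2))
      = fun x : ℝ => physHermite (n + 1) x * Real.exp (-x ^ 2) := by funext x; ring
  rw [h, J_zero_succ]

lemma J1_succ (n : ℕ) : ∫ x : ℝ, x ^ 1 * physHermite (n + 2) x * Real.exp (-x ^ 2) = 0 := by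
  rw [J_rec 0 (n + 1), J0_succ]
  ring

lemma J2_succ (n : ℕ) : ∫ x : ℝ, x ^ 2 * physHermite (n + 3) x * Real.exp (-x ^ 2) = 0 := by
  rw [J_rec 1 (n + 2), J1_succ]
  ring

lemma pow_mul_awHermite_eq (α u : ℝ) (hα : α ≠ 0) (m k : ℕ) :
    (fun v : ℝ => v ^ k * awHermite α u m v)
      = fun v : ℝ => (fun w : ℝ => (Real.sqrt (Real.pi * 2 ^ m * (m.factorial : ℝ)))⁻¹ *
          ((α * w + u) ^ k * physHermite m w * Real.exp (-w ^ 2))) (α⁻¹ * (v - u)) := by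
  funext v
  have h2 : α * (α⁻¹ * (v - u)) + u = v := by field_simp; ring
  have h1 : α⁻¹ * (v - u) = (v - u) / α := inv_mul_eq_div _ _
  beta_reduce
  rw [h2, h1, awHermite]
  ring

lemma integral_comp_affine (G : ℝ → ℝ) (α u : ℝ) (hα : 0 < α) :
    ∫ v : ℝ, G (α⁻¹ * (v - u)) = α * ∫ x : ℝ, G x := by
  have h1 : ∫ v : ℝ, G (α⁻¹ * (v - u)) = ∫ w : ℝ, G (α⁻¹ * w) :=
    integral_sub_right_eq_self (fun w : ℝ => G (α⁻¹ * w)) u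
  rw [h1, Measure.integral_comp_inv_mul_left G α, abs_of_pos hα, smul_eq_mul]

lemma integrable_affine_pow_pH (α u : ℝ) (m k : ℕ) :
    Integrable (fun w : ℝ => (α * w + u) ^ k * physHermite m w * Real.exp (-w ^ 2)) := by
  have heq : (fun w : ℝ => (α * w + u) ^ k * physHermite m w * Real.exp (-w ^ 2))
      = fun w : ℝ => ∑ j ∈ Finset.range (k + 1),
          (α ^ j * u ^ (k - j) * (k.choose j : ℝ)) *
            (w ^ j * physHermite m w * Real.exp (-w ^ 2)) := by
    funext w
    rw [add_pow, Finset.sum_mul, Finset.sum_mul]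
    refine Finset.sum_congr rfl fun j hj => ?_
    rw [mul_pow]
    ring
  rw [heq]
  exact integrable_finset_sum _ fun j _ => (integrable_pow_pH_exp m j).const_mul _

lemma integrable_pow_mul_awHermite (α u : ℝ) (hα : 0 < α) (m k : ℕ) :
    Integrable (fun v : ℝ => v ^ k * awHermite α u m v) := by
  rw [pow_mul_awHermite_eq α u hα.ne' m k]
  have h1 : Integrable (fun w : ℝ => (Real.sqrt (Real.pi * 2 ^ m * (m.factorial : ℝ)))⁻¹ *
      ((α * w + u) ^ k * physHermite m w * Real.exp (-w ^ 2))) :=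
    (integrable_affine_pow_pH α u m k).const_mul _
  have h2 := h1.comp_mul_left' (R := α⁻¹) (inv_ne_zero hα.ne')
  exact h2.comp_sub_right u

lemma moment_awHermite (α u : ℝ) (hα : 0 < α) (m k : ℕ) :
    ∫ v : ℝ, v ^ k * awHermite α u m v
      = α * ((Real.sqrt (Real.pi * 2 ^ m * (m.factorial : ℝ)))⁻¹ *
          ∫ x : ℝ, (α * x + u) ^ k * physHermite m x * Real.exp (-x ^ 2)) := by
  rw [pow_mul_awHermite_eq α u hα.ne' m k,
    integral_comp_affine (fun w : ℝ => (Real.sqrt (Real.pi * 2 ^ m * (m.factorial : ℝ)))⁻¹ *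
      ((α * w + u) ^ k * physHermite m w * Real.exp (-w ^ 2))) α u hα,
    integral_const_mul]

lemma J00' : ∫ x : ℝ, x ^ 0 * physHermite 0 x * Real.exp (-x ^ 2) = Real.sqrt π := by
  have h : (fun x : ℝ => x ^ 0 * physHermite 0 x * Real.exp (-x ^ 2))
      = fun x : ℝ => physHermite 0 x * Real.exp (-x ^ 2) := by funext x; ring
  rw [h, J00]

lemma int_aff0 (α u : ℝ) (m : ℕ) :
    ∫ x : ℝ, (α * x + u) ^ 0 * physHermite m x * Real.exp (-x ^ 2)
      = ∫ x : ℝ, x ^ 0 * physHermite m x * Real.exp (-x ^ 2) := by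
  have h : (fun x : ℝ => (α * x + u) ^ 0 * physHermite m x * Real.exp (-x ^ 2))
      = fun x : ℝ => x ^ 0 * physHermite m x * Real.exp (-x ^ 2) := by funext x; ring
  rw [h]

lemma int_aff1 (α u : ℝ) (m : ℕ) :
    ∫ x : ℝ, (α * x + u) ^ 1 * physHermite m x * Real.exp (-x ^ 2)
      = α * (∫ x : ℝ, x ^ 1 * physHermite m x * Real.exp (-x ^ 2))
        + u * ∫ x : ℝ, x ^ 0 * physHermite m x * Real.exp (-x ^ 2) := by
  have heq : (fun x : ℝ => (α * x + u) ^ 1 * physHermite m x * Real.exp (-x ^ 2))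
      = fun x : ℝ => α * (x ^ 1 * physHermite m x * Real.exp (-x ^ 2))
          + u * (x ^ 0 * physHermite m x * Real.exp (-x ^ 2)) := by
    funext x; ring
  have hA : Integrable (fun x : ℝ => α * (x ^ 1 * physHermite m x * Real.exp (-x ^ 2))) :=
    (integrable_pow_pH_exp m 1).const_mul _
  have hB : Integrable (fun x : ℝ => u * (x ^ 0 * physHermite m x * Real.exp (-x ^ 2))) :=
    (integrable_pow_pH_exp m 0).const_mul _
  rw [heq, integral_add hA hB]
  simp only [integral_const_mul]

lemma int_aff2 (α u : ℝ) (m : ℕ) :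
    ∫ x : ℝ, (α * x + u) ^ 2 * physHermite m x * Real.exp (-x ^ 2)
      = α ^ 2 * (∫ x : ℝ, x ^ 2 * physHermite m x * Real.exp (-x ^ 2))
        + 2 * α * u * (∫ x : ℝ, x ^ 1 * physHermite m x * Real.exp (-x ^ 2))
        + u ^ 2 * ∫ x : ℝ, x ^ 0 * physHermite m x * Real.exp (-x ^ 2) := by
  have heq : (fun x : ℝ => (α * x + u) ^ 2 * physHermite m x * Real.exp (-x ^ 2))
      = fun x : ℝ => (α ^ 2 * (x ^ 2 * physHermite m x * Real.exp (-x ^ 2))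
          + 2 * α * u * (x ^ 1 * physHermite m x * Real.exp (-x ^ 2)))
          + u ^ 2 * (x ^ 0 * physHermite m x * Real.exp (-x ^ 2)) := by
    funext x; ring
  have hA : Integrable (fun x : ℝ => α ^ 2 * (x ^ 2 * physHermite m x * Real.exp (-x ^ 2))) :=
    (integrable_pow_pH_exp m 2).const_mul _
  have hB : Integrable (fun x : ℝ => 2 * α * u * (x ^ 1 * physHermite m x * Real.exp (-x ^ 2))) :=
    (integrable_pow_pH_exp m 1).const_mul _
  have hC : Integrable (fun x : ℝ => u ^ 2 * (x ^ 0 * physHermite m x * Real.exp (-x ^ 2))) :=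
    (integrable_pow_pH_exp m 0).const_mul _
  have hAB : Integrable (fun x : ℝ => α ^ 2 * (x ^ 2 * physHermite m x * Real.exp (-x ^ 2))
      + 2 * α * u * (x ^ 1 * physHermite m x * Real.exp (-x ^ 2))) := hA.add hB
  rw [heq, integral_add hAB hC, integral_add hA hB]
  simp only [integral_const_mul]

lemma sqrt_pi_ne : Real.sqrt π ≠ 0 := ne_of_gt (Real.sqrt_pos.mpr Real.pi_pos)
lemma sqrt_two_ne : Real.sqrt 2 ≠ 0 := by positivity
lemma sqrt_two_sq : Real.sqrt 2 * Real.sqrt 2 = 2 := Real.mul_self_sqrt (by norm_num)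

lemma rho0 : (Real.sqrt (Real.pi * 2 ^ (0:ℕ) * ((0:ℕ).factorial : ℝ)))⁻¹ = (Real.sqrt π)⁻¹ := by
  norm_num

lemma rho1 : (Real.sqrt (Real.pi * 2 ^ (1:ℕ) * ((1:ℕ).factorial : ℝ)))⁻¹
    = (Real.sqrt π * Real.sqrt 2)⁻¹ := by
  rw [show Real.pi * 2 ^ (1:ℕ) * ((1:ℕ).factorial : ℝ) = π * 2 by
      rw [show (((1:ℕ).factorial : ℕ) : ℝ) = 1 by norm_num [Nat.factorial]]; ring,
    Real.sqrt_mul Real.pi_pos.le]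

lemma rho2 : (Real.sqrt (Real.pi * 2 ^ (2:ℕ) * ((2:ℕ).factorial : ℝ)))⁻¹
    = (Real.sqrt π * (2 * Real.sqrt 2))⁻¹ := by
  rw [show Real.pi * 2 ^ (2:ℕ) * ((2:ℕ).factorial : ℝ) = π * 8 by
      rw [show (((2:ℕ).factorial : ℕ) : ℝ) = 2 by norm_num [Nat.factorial]]; ring,
    Real.sqrt_mul Real.pi_pos.le,
    show (8:ℝ) = 2 ^ 2 * 2 by norm_num, Real.sqrt_mul (by positivity),
    Real.sqrt_sq (by norm_num : (0:ℝ) ≤ 2)]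

lemma P0_0 {α : ℝ} (u : ℝ) (hα : 0 < α) : ∫ v : ℝ, v ^ 0 * awHermite α u 0 v = α := by
  rw [moment_awHermite α u hα 0 0, rho0, int_aff0, J00']
  field_simp

lemma P0_succ {α : ℝ} (u : ℝ) (hα : 0 < α) (m : ℕ) :
    ∫ v : ℝ, v ^ 0 * awHermite α u (m + 1) v = 0 := by
  rw [moment_awHermite α u hα (m + 1) 0, int_aff0, J0_succ]
  ring

lemma P1_0 {α : ℝ} (u : ℝ) (hα : 0 < α) : ∫ v : ℝ, v ^ 1 * awHermite α u 0 v = α * u := by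
  rw [moment_awHermite α u hα 0 1, rho0, int_aff1, J10, J00']
  field_simp
  ring

lemma P1_1 {α : ℝ} (u : ℝ) (hα : 0 < α) :
    ∫ v : ℝ, v ^ 1 * awHermite α u 1 v = α ^ 2 * Real.sqrt 2 / 2 := by
  rw [moment_awHermite α u hα 1 1, rho1, int_aff1, J1_1, J0_succ 0]
  have h2 := sqrt_two_sq
  have hπ := sqrt_pi_ne
  have hs := sqrt_two_ne
  field_simp
  linear_combination (-(α * Real.sqrt π)) * h2

lemma P1_succ {α : ℝ} (u : ℝ) (hα : 0 < α) (m : ℕ) :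
    ∫ v : ℝ, v ^ 1 * awHermite α u (m + 2) v = 0 := by
  rw [moment_awHermite α u hα (m + 2) 1, int_aff1, J1_succ, J0_succ]
  ring

lemma P2_0 {α : ℝ} (u : ℝ) (hα : 0 < α) :
    ∫ v : ℝ, v ^ 2 * awHermite α u 0 v = α ^ 3 / 2 + α * u ^ 2 := by
  rw [moment_awHermite α u hα 0 2, rho0, int_aff2, J2_0, J10, J00']
  field_simp
  ring

lemma P2_1 {α : ℝ} (u : ℝ) (hα : 0 < α) :
    ∫ v : ℝ, v ^ 2 * awHermite α u 1 v = Real.sqrt 2 * α ^ 2 * u := by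
  rw [moment_awHermite α u hα 1 2, rho1, int_aff2, J2_1, J1_1, J0_succ 0]
  have h2 := sqrt_two_sq
  have hπ := sqrt_pi_ne
  have hs := sqrt_two_ne
  field_simp
  linear_combination (-(α * u * Real.sqrt π)) * h2

lemma P2_2 {α : ℝ} (u : ℝ) (hα : 0 < α) :
    ∫ v : ℝ, v ^ 2 * awHermite α u 2 v = Real.sqrt 2 * α ^ 3 / 2 := by
  rw [moment_awHermite α u hα 2 2, rho2, int_aff2, J2_2, J1_succ 0, J0_succ 1]
  have h2 := sqrt_two_sq
  have hπ := sqrt_pi_ne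
  have hs := sqrt_two_ne
  field_simp
  linear_combination (-(α ^ 2 * Real.sqrt π)) * h2

lemma P2_succ {α : ℝ} (u : ℝ) (hα : 0 < α) (m : ℕ) :
    ∫ v : ℝ, v ^ 2 * awHermite α u (m + 3) v = 0 := by
  rw [moment_awHermite α u hα (m + 3) 2, int_aff2, J2_succ, J1_succ, J0_succ]
  ring

lemma sum_range_three_of_vanish (g : ℕ → ℝ) (h3 : ∀ m, g (m + 3) = 0) :
    ∀ N : ℕ, 2 ≤ N → ∑ m ∈ Finset.range (N + 1), g m = g 0 + g 1 + g 2 := by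
  intro N
  induction N with
  | zero => intro h; omega
  | succ n ih =>
    intro hN
    rcases Nat.lt_or_ge n 2 with h | h
    · have hn : n = 1 := by omega
      subst hn
      simp [Finset.sum_range_succ]
    · rw [Finset.sum_range_succ, ih h]
      have hn : n + 1 = (n - 2) + 3 := by omega
      rw [hn, h3]
      ring


/-- Physics-based update formula for the Hermite scaling parameter. -/
theorem hermite_scaling_update (N : ℕ) (hN : 2 ≤ N) (α u : ℝ) (hα : 0 < α)
    (c : ℕ → ℝ) (hc0 : c 0 ≠ 0) (f : ℝ → ℝ)
    (hf : ∀ v : ℝ, f v = ∑ m ∈ Finset.range (N + 1), c m * awHermite α u m v)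
    (ubar : ℝ) (hubar : ubar = (∫ v : ℝ, v * f v) / (∫ v : ℝ, f v)) :
    2 * (∫ v : ℝ, (v - ubar) ^ 2 * f v) / (∫ v : ℝ, f v)
      = α ^ 2 * (1 + Real.sqrt 2 * (c 2 / c 0) - (c 1 / c 0) ^ 2) := by
  have hIaw : ∀ m : ℕ, Integrable (fun v : ℝ => awHermite α u m v) := fun m => by
    simpa using integrable_pow_mul_awHermite α u hα m 0
  have hI1 : ∀ m : ℕ, Integrable (fun v : ℝ => v * awHermite α u m v) := fun m => by
    simpa using integrable_pow_mul_awHermite α u hα m 1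
  have hI2 : ∀ m : ℕ, Integrable (fun v : ℝ => v ^ 2 * awHermite α u m v) := fun m =>
    integrable_pow_mul_awHermite α u hα m 2
  -- function rewrites
  have hfeq : f = fun v : ℝ => ∑ m ∈ Finset.range (N + 1), c m * awHermite α u m v :=
    funext hf
  have hfeq1 : (fun v : ℝ => v * f v)
      = fun v : ℝ => ∑ m ∈ Finset.range (N + 1), c m * (v * awHermite α u m v) := by
    funext v
    rw [hf v, Finset.mul_sum]
    exact Finset.sum_congr rfl fun m _ => by ring
  have hfeq2 : (fun v : ℝ => v ^ 2 * f v)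
      = fun v : ℝ => ∑ m ∈ Finset.range (N + 1), c m * (v ^ 2 * awHermite α u m v) := by
    funext v
    rw [hf v, Finset.mul_sum]
    exact Finset.sum_congr rfl fun m _ => by ring
  -- integrability of the three moments of f
  have hIf0 : Integrable f := by
    rw [hfeq]; exact integrable_finset_sum _ fun m _ => (hIaw m).const_mul _
  have hIf1 : Integrable (fun v : ℝ => v * f v) := by
    rw [hfeq1]; exact integrable_finset_sum _ fun m _ => (hI1 m).const_mul _
  have hIf2 : Integrable (fun v : ℝ => v ^ 2 * f v) := by
    rw [hfeq2]; exact integrable_finset_sum _ fun m _ => (hI2 m).const_mul _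
  -- the three integrals
  have hS0 : ∫ v : ℝ, f v = c 0 * α := by
    rw [hfeq, integral_finset_sum _ fun m _ => (hIaw m).const_mul _]
    simp only [integral_const_mul]
    rw [sum_range_three_of_vanish _ (fun m => by
      rw [show (∫ v : ℝ, awHermite α u (m + 3) v) = 0 from by
        simpa using P0_succ u hα (m + 2)]; ring) N hN]
    rw [show (∫ v : ℝ, awHermite α u 0 v) = α from by simpa using P0_0 u hα,
      show (∫ v : ℝ, awHermite α u 1 v) = 0 from by simpa using P0_succ u hα 0,
      show (∫ v : ℝ, awHermite α u 2 v) = 0 from by simpa using P0_succ u hα 1]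
    ring
  have hS1 : ∫ v : ℝ, v * f v = c 0 * (α * u) + c 1 * (α ^ 2 * Real.sqrt 2 / 2) := by
    rw [hfeq1, integral_finset_sum _ fun m _ => (hI1 m).const_mul _]
    simp only [integral_const_mul]
    rw [sum_range_three_of_vanish _ (fun m => by
      rw [show (∫ v : ℝ, v * awHermite α u (m + 3) v) = 0 from by
        simpa using P1_succ u hα (m + 1)]; ring) N hN]
    rw [show (∫ v : ℝ, v * awHermite α u 0 v) = α * u from by simpa using P1_0 u hα,
      show (∫ v : ℝ, v * awHermite α u 1 v) = α ^ 2 * Real.sqrt 2 / 2 from by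
        simpa using P1_1 u hα,
      show (∫ v : ℝ, v * awHermite α u 2 v) = 0 from by simpa using P1_succ u hα 0]
    ring
  have hS2 : ∫ v : ℝ, v ^ 2 * f v
      = c 0 * (α ^ 3 / 2 + α * u ^ 2) + c 1 * (Real.sqrt 2 * α ^ 2 * u)
        + c 2 * (Real.sqrt 2 * α ^ 3 / 2) := by
    rw [hfeq2, integral_finset_sum _ fun m _ => (hI2 m).const_mul _]
    simp only [integral_const_mul]
    rw [sum_range_three_of_vanish _ (fun m => by
      rw [P2_succ u hα m]; ring) N hN]
    rw [P2_0 u hα, P2_1 u hα, P2_2 u hα]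
  -- expansion of the centered second moment
  have hA : Integrable (fun v : ℝ => v ^ 2 * f v - 2 * ubar * (v * f v)) :=
    hIf2.sub (hIf1.const_mul _)
  have hB : Integrable (fun v : ℝ => ubar ^ 2 * f v) := hIf0.const_mul _
  have hsplit : ∫ v : ℝ, (v - ubar) ^ 2 * f v
      = (∫ v : ℝ, v ^ 2 * f v) - 2 * ubar * (∫ v : ℝ, v * f v)
        + ubar ^ 2 * ∫ v : ℝ, f v := by
    have h1 : (fun v : ℝ => (v - ubar) ^ 2 * f v)
        = fun v : ℝ => (v ^ 2 * f v - 2 * ubar * (v * f v)) + ubar ^ 2 * f v := by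
      funext v; ring
    rw [h1, integral_add hA hB, integral_sub hIf2 (hIf1.const_mul _), integral_const_mul,
      integral_const_mul]
  rw [hS0, hS1] at hubar
  rw [hsplit, hS0, hS1, hS2, hubar]
  have h2 := sqrt_two_sq
  have hα' : α ≠ 0 := hα.ne'
  have hc0α : c 0 * α ≠ 0 := mul_ne_zero hc0 hα'
  field_simp
  linear_combination (-(α ^ 2 * c 1 ^ 2)) * sqrt_two_sq
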